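/- Let H be an m × p real matrix, let s ≥ 1, let S be a set of column indices with |S| = s such that the Gram matrix G = H_Sᵀ H_S is invertible, and let U be the p × s matrix whose columns are the standard basis vectors e_i of ℝ^p for i ∈ S. Let α̂ : ℝ^m → ℝ^p be a measurable estimator such that ∫ ‖α̂(Hα₀ + w)‖² dν(w) < ∞, and suppose α̂ is unbiased on the support subspace, i.e., for every α ∈ ℝ^p with supp(α) ⊆ S one has ∫ α̂(Hα + w) dν(w) = α. Then for every α₀ with supp(α₀) ⊆ S, the covariance-type matrix C of α̂ at α₀ satisfies C ⪰ σ² · U G⁻¹ Uᵀ. -/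

import Mathlib

open MeasureTheory ProbabilityTheory Matrix Real ENNReal NNReal

lemma my_lintegral_pi_prod : ∀ {n : ℕ} (μ : Fin n → Measure ℝ),
    (∀ i, IsProbabilityMeasure (μ i)) → ∀ (f : Fin n → ℝ → ℝ≥0∞), (∀ i, Measurable (f i)) →
    ∫⁻ x, ∏ i, f i (x i) ∂Measure.pi μ = ∏ i, ∫⁻ x, f i x ∂μ i := by
  intro n
  induction n with
  | zero =>
    intro μ hμ f hf
    haveI := hμ
    simp only [Finset.univ_eq_empty, Finset.prod_empty]
    rw [lintegral_const, one_mul]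
    simp [Measure.pi_univ]
  | succ n ih =>
    intro μ hμ f hf
    haveI := hμ
    have mp := (measurePreserving_piFinSuccAbove μ 0).symm
    have hF : Measurable fun x : Fin (n+1) → ℝ => ∏ i, f i (x i) :=
      Finset.measurable_prod _ fun i _ => (hf i).comp (measurable_pi_apply i)
    rw [← mp.lintegral_comp hF]
    have heq : ∀ y : ℝ × (Fin n → ℝ),
        (∏ i, f i (((MeasurableEquiv.piFinSuccAbove (fun _ => ℝ) 0).symm y) i))
          = f 0 y.1 * ∏ j, f (Fin.succ j) (y.2 j) := by
      intro y
      simp [MeasurableEquiv.piFinSuccAbove_symm_apply, Fin.insertNth_zero,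
        Fin.zero_succAbove, Fin.prod_univ_succ]
    simp_rw [heq]
    rw [lintegral_prod_mul (f := fun a => f 0 a) (g := fun b : Fin n → ℝ => ∏ j, f (Fin.succ j) (b j)) (hf 0).aemeasurable
      ((Finset.measurable_prod _ fun j _ => (hf _).comp (measurable_pi_apply j)).aemeasurable)]
    rw [ih _ (fun j => hμ _) _ (fun j => hf _), Fin.prod_univ_succ]
    simp [Fin.zero_succAbove]

lemma my_gauss_shift_density (V : ℝ≥0) (hV : V ≠ 0) (c : ℝ) :
    gaussianReal c V = (gaussianReal 0 V).withDensity
      (fun x => ENNReal.ofReal (rexp ((c * x - c ^ 2 / 2) / V))) := by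
  rw [gaussianReal_of_var_ne_zero _ hV, gaussianReal_of_var_ne_zero _ hV,
    ← withDensity_mul _ (measurable_gaussianPDF 0 V)
      ((by fun_prop : Measurable fun x : ℝ => ENNReal.ofReal (rexp ((c * x - c ^ 2 / 2) / (V:ℝ)))))]
  congr 1
  ext x
  simp only [Pi.mul_apply, gaussianPDF, ← ENNReal.ofReal_mul (gaussianPDFReal_nonneg 0 V x)]
  congr 1
  have hV' : (V : ℝ) ≠ 0 := by exact_mod_cast hV
  simp only [gaussianPDFReal, sub_zero]
  rw [mul_assoc ((Real.sqrt (2 * π * (V:ℝ)))⁻¹), ← Real.exp_add]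
  congr 2
  field_simp
  ring

lemma my_gauss_pdf_mul_exp (V : ℝ≥0) (a x : ℝ) :
    rexp (a * x) * gaussianPDFReal 0 V x = rexp (a ^ 2 * V / 2) * gaussianPDFReal (a * V) V x := by
  rcases eq_or_ne V 0 with h | h
  · simp [h, gaussianPDFReal_zero_var]
  have hV' : (V : ℝ) ≠ 0 := by exact_mod_cast h
  simp only [gaussianPDFReal, sub_zero]
  rw [mul_left_comm, mul_left_comm (rexp (a ^ 2 * (V : ℝ) / 2))]
  congr 1
  rw [← Real.exp_add, ← Real.exp_add]
  congr 1
  field_simp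
  ring

lemma my_gauss_exp_integrable (V : ℝ≥0) (hV : V ≠ 0) (a : ℝ) :
    Integrable (fun x => rexp (a * x)) (gaussianReal 0 V) := by
  rw [gaussianReal_of_var_ne_zero _ hV,
    integrable_withDensity_iff (measurable_gaussianPDF 0 V)
      (ae_of_all _ fun x => ENNReal.ofReal_lt_top)]
  have : (fun x => rexp (a * x) * (gaussianPDF 0 V x).toReal)
      = fun x => rexp (a ^ 2 * V / 2) * gaussianPDFReal (a * V) V x := by
    ext x
    rw [gaussianPDF, ENNReal.toReal_ofReal (gaussianPDFReal_nonneg 0 V x),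
      my_gauss_pdf_mul_exp]
  rw [this]
  exact (integrable_gaussianPDFReal _ _).const_mul _

lemma my_gauss_mgf (V : ℝ≥0) (hV : V ≠ 0) (a : ℝ) :
    ∫ x, rexp (a * x) ∂gaussianReal 0 V = rexp (a ^ 2 * V / 2) := by
  rw [gaussianReal_of_var_ne_zero _ hV]
  have h1 : (volume : Measure ℝ).withDensity (gaussianPDF 0 V)
      = (volume : Measure ℝ).withDensity (fun x => ((gaussianPDFReal 0 V x).toNNReal : ℝ≥0∞)) :=
    rfl
  rw [h1, integral_withDensity_eq_integral_smul
    ((measurable_gaussianPDFReal 0 V).real_toNNReal) _]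
  have : (fun x => (gaussianPDFReal 0 V x).toNNReal • rexp (a * x))
      = fun x => rexp (a ^ 2 * V / 2) * gaussianPDFReal (a * V) V x := by
    ext x
    rw [NNReal.smul_def, smul_eq_mul, Real.coe_toNNReal _ (gaussianPDFReal_nonneg 0 V x),
      mul_comm, my_gauss_pdf_mul_exp]
  rw [this, integral_const_mul, integral_gaussianPDFReal_eq_one _ hV, mul_one]

section PiStuff

variable (V : ℝ≥0) {m : ℕ} (c : Fin m → ℝ)

lemma my_L_meas : Measurable (fun w : Fin m → ℝ => ∏ i, rexp ((c i * w i - c i ^ 2 / 2) / V)) :=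
  Finset.measurable_prod _ fun i _ => by fun_prop

lemma my_L_nonneg (w : Fin m → ℝ) :
    0 ≤ ∏ i, rexp ((c i * w i - c i ^ 2 / 2) / V) :=
  Finset.prod_nonneg fun i _ => (Real.exp_pos _).le

lemma my_pi_density (hV : V ≠ 0) :
    Measure.pi (fun i => gaussianReal (c i) V)
    = (Measure.pi fun _ : Fin m => gaussianReal 0 V).withDensity
      (fun w => ENNReal.ofReal (∏ i, rexp ((c i * w i - c i ^ 2 / 2) / V))) := by
  refine Measure.pi_eq fun s hs => ?_
  rw [withDensity_apply _ (MeasurableSet.univ_pi hs),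
    ← lintegral_indicator (MeasurableSet.univ_pi hs)]
  have hpt : ∀ w : Fin m → ℝ,
      (Set.univ.pi s).indicator
        (fun w => ENNReal.ofReal (∏ i, rexp ((c i * w i - c i ^ 2 / 2) / V))) w
      = ∏ i, (s i).indicator
          (fun x => ENNReal.ofReal (rexp ((c i * x - c i ^ 2 / 2) / V))) (w i) := by
    intro w
    by_cases h : w ∈ Set.univ.pi s
    · rw [Set.indicator_of_mem h,
        ENNReal.ofReal_prod_of_nonneg fun i _ => (Real.exp_pos _).le]
      exact Finset.prod_congr rfl fun i _ =>
        (Set.indicator_of_mem (h i (Set.mem_univ i))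
          (fun x => ENNReal.ofReal (rexp ((c i * x - c i ^ 2 / 2) / (V:ℝ))))).symm
    · rw [Set.indicator_of_notMem h]
      have h' : ¬ ∀ i, w i ∈ s i := by simpa [Set.mem_pi] using h
      push_neg at h'
      obtain ⟨i, hi⟩ := h'
      exact (Finset.prod_eq_zero (Finset.mem_univ i)
        (Set.indicator_of_notMem hi _)).symm
  simp_rw [hpt]
  rw [my_lintegral_pi_prod _ (fun _ => inferInstance) _
    (fun i => ((by fun_prop : Measurable fun x : ℝ =>
      ENNReal.ofReal (rexp ((c i * x - c i ^ 2 / 2) / (V:ℝ))))).indicator (hs i))]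
  refine Finset.prod_congr rfl fun i _ => ?_
  rw [lintegral_indicator (hs i), ← withDensity_apply _ (hs i), ← my_gauss_shift_density V hV]

lemma my_pi_map_add :
    (Measure.pi fun _ : Fin m => gaussianReal 0 V).map (fun w => w + c)
    = Measure.pi (fun i => gaussianReal (c i) V) := by
  refine (Measure.pi_eq fun s hs => ?_).symm
  rw [Measure.map_apply (measurable_add_const c) (MeasurableSet.univ_pi hs)]
  have : (fun w : Fin m → ℝ => w + c) ⁻¹' Set.univ.pi s
      = Set.univ.pi fun i => (· + c i) ⁻¹' s i := by
    ext w
    simp [Set.mem_pi]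
  rw [this, Measure.pi_pi]
  refine Finset.prod_congr rfl fun i _ => ?_
  have : gaussianReal (c i) V = (gaussianReal 0 V).map (· + c i) := by
    rw [gaussianReal_map_add_const, zero_add]
  rw [this, Measure.map_apply (measurable_add_const (c i)) (hs i)]

end PiStuff

section CM

variable (V : ℝ≥0) {m : ℕ} (c : Fin m → ℝ)

lemma my_cm_int_iff (f : (Fin m → ℝ) → ℝ) (hV : V ≠ 0) :
    Integrable (fun w => f (w + c)) (Measure.pi fun _ : Fin m => gaussianReal 0 V) ↔
    Integrable (fun w => f w * ∏ i, rexp ((c i * w i - c i ^ 2 / 2) / V))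
      (Measure.pi fun _ : Fin m => gaussianReal 0 V) := by
  have he : MeasurableEmbedding (fun w : Fin m → ℝ => w + c) :=
    (MeasurableEquiv.addRight c).measurableEmbedding
  rw [show (fun w : Fin m → ℝ => f (w + c)) = f ∘ (fun w : Fin m → ℝ => w + c) from rfl,
    ← he.integrable_map_iff, my_pi_map_add V c, my_pi_density V c hV,
    integrable_withDensity_iff (my_L_meas V c).ennreal_ofReal
      (ae_of_all _ fun w => ENNReal.ofReal_lt_top)]
  refine integrable_congr (ae_of_all _ fun w => ?_)
  simp only [ENNReal.toReal_ofReal (my_L_nonneg V c w)]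

lemma my_cm_integral (f : (Fin m → ℝ) → ℝ) (hV : V ≠ 0) :
    ∫ w, f (w + c) ∂(Measure.pi fun _ : Fin m => gaussianReal 0 V)
    = ∫ w, f w * ∏ i, rexp ((c i * w i - c i ^ 2 / 2) / V)
        ∂(Measure.pi fun _ : Fin m => gaussianReal 0 V) := by
  have he : MeasurableEmbedding (fun w : Fin m → ℝ => w + c) :=
    (MeasurableEquiv.addRight c).measurableEmbedding
  have h1 := he.integral_map (μ := Measure.pi fun _ : Fin m => gaussianReal 0 V) (g := f)
  rw [my_pi_map_add V c, my_pi_density V c hV] at h1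
  rw [← h1]
  have h2 : (Measure.pi fun _ : Fin m => gaussianReal 0 V).withDensity
      (fun w => ENNReal.ofReal (∏ i, rexp ((c i * w i - c i ^ 2 / 2) / V)))
      = (Measure.pi fun _ : Fin m => gaussianReal 0 V).withDensity
      (fun w => ((∏ i, rexp ((c i * w i - c i ^ 2 / 2) / V)).toNNReal : ℝ≥0∞)) := rfl
  rw [h2, integral_withDensity_eq_integral_smul (my_L_meas V c).real_toNNReal]
  refine integral_congr_ae (ae_of_all _ fun w => ?_)
  simp only [NNReal.smul_def, smul_eq_mul, Real.coe_toNNReal _ (my_L_nonneg V c w), mul_comm]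

lemma my_r_eq (a : ℝ) (hV : V ≠ 0) : (fun x : ℝ => rexp ((a * x - a ^ 2 / 2) / V))
    = fun x => rexp (-a ^ 2 / (2 * V)) * rexp (a / V * x) := by
  have hV' : (V : ℝ) ≠ 0 := by exact_mod_cast hV
  ext x
  rw [← Real.exp_add]
  congr 1
  field_simp
  ring

lemma my_r_integrable (a : ℝ) (hV : V ≠ 0) :
    Integrable (fun x : ℝ => rexp ((a * x - a ^ 2 / 2) / V)) (gaussianReal 0 V) := by
  rw [my_r_eq V a hV]
  exact (my_gauss_exp_integrable V hV (a / V)).const_mul _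

lemma my_r_integral (a : ℝ) (hV : V ≠ 0) :
    ∫ x, rexp ((a * x - a ^ 2 / 2) / V) ∂gaussianReal 0 V = 1 := by
  have hV' : (V : ℝ) ≠ 0 := by exact_mod_cast hV
  rw [my_r_eq V a hV, integral_const_mul, my_gauss_mgf V hV, ← Real.exp_add]
  rw [show -a ^ 2 / (2 * (V:ℝ)) + (a / V) ^ 2 * V / 2 = 0 by field_simp; ring, Real.exp_zero]

lemma my_L_lintegral (hV : V ≠ 0) :
    ∫⁻ w, ENNReal.ofReal (∏ i, rexp ((c i * w i - c i ^ 2 / 2) / V))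
      ∂(Measure.pi fun _ : Fin m => gaussianReal 0 V) = 1 := by
  have : ∀ w : Fin m → ℝ, ENNReal.ofReal (∏ i, rexp ((c i * w i - c i ^ 2 / 2) / V))
      = ∏ i, ENNReal.ofReal (rexp ((c i * w i - c i ^ 2 / 2) / V)) := fun w =>
    ENNReal.ofReal_prod_of_nonneg fun i _ => (Real.exp_pos _).le
  simp_rw [this]
  rw [my_lintegral_pi_prod (fun _ => gaussianReal 0 V) (fun _ => inferInstance)
    (fun i x => ENNReal.ofReal (rexp ((c i * x - c i ^ 2 / 2) / V))) (fun i => by fun_prop)]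
  have : ∀ i : Fin m, ∫⁻ x, ENNReal.ofReal (rexp ((c i * x - c i ^ 2 / 2) / V))
      ∂gaussianReal 0 V = 1 := by
    intro i
    rw [← ofReal_integral_eq_lintegral_ofReal (my_r_integrable V _ hV)
      (ae_of_all _ fun x => (Real.exp_pos _).le), my_r_integral V _ hV, ENNReal.ofReal_one]
  simp [this]

lemma my_L_integrable (hV : V ≠ 0) :
    Integrable (fun w => ∏ i, rexp ((c i * w i - c i ^ 2 / 2) / V))
      (Measure.pi fun _ : Fin m => gaussianReal 0 V) := by
  refine ⟨(my_L_meas V c).aestronglyMeasurable, ?_⟩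
  rw [hasFiniteIntegral_iff_ofReal (ae_of_all _ fun w => my_L_nonneg V c w),
    my_L_lintegral V c hV]
  exact ENNReal.one_lt_top

lemma my_L_integral (hV : V ≠ 0) :
    ∫ w, ∏ i, rexp ((c i * w i - c i ^ 2 / 2) / V)
      ∂(Measure.pi fun _ : Fin m => gaussianReal 0 V) = 1 := by
  rw [integral_eq_lintegral_of_nonneg_ae (ae_of_all _ fun w => my_L_nonneg V c w)
    (my_L_meas V c).aestronglyMeasurable, my_L_lintegral V c hV, ENNReal.toReal_one]

lemma my_L_sq (hV : V ≠ 0) (w : Fin m → ℝ) :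
    (∏ i, rexp ((c i * w i - c i ^ 2 / 2) / V)) ^ 2
    = rexp ((∑ i, c i ^ 2) / V) * ∏ i, rexp ((2 * c i * w i - (2 * c i) ^ 2 / 2) / V) := by
  have hV' : (V : ℝ) ≠ 0 := by exact_mod_cast hV
  rw [← Finset.prod_pow]
  rw [show ((∑ i, c i ^ 2) / (V:ℝ)) = ∑ i, c i ^ 2 / V by rw [Finset.sum_div]]
  rw [Real.exp_sum, ← Finset.prod_mul_distrib]
  refine Finset.prod_congr rfl fun i _ => ?_
  rw [← Real.exp_nat_mul, ← Real.exp_add]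
  congr 1
  field_simp
  ring

lemma my_L_sq_integrable (hV : V ≠ 0) :
    Integrable (fun w => (∏ i, rexp ((c i * w i - c i ^ 2 / 2) / V)) ^ 2)
      (Measure.pi fun _ : Fin m => gaussianReal 0 V) := by
  simp_rw [my_L_sq V c hV]
  exact (my_L_integrable V (fun i => 2 * c i) hV).const_mul _

lemma my_L_sq_integral (hV : V ≠ 0) :
    ∫ w, (∏ i, rexp ((c i * w i - c i ^ 2 / 2) / V)) ^ 2
      ∂(Measure.pi fun _ : Fin m => gaussianReal 0 V) = rexp ((∑ i, c i ^ 2) / V) := by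
  simp_rw [my_L_sq V c hV]
  rw [integral_const_mul, my_L_integral V _ hV, mul_one]

end CM

lemma my_integrable_mul {α : Type*} [MeasurableSpace α] {μ : Measure α} {f g : α → ℝ}
    (hfm : AEStronglyMeasurable f μ) (hgm : AEStronglyMeasurable g μ)
    (hf : Integrable (fun x => f x ^ 2) μ) (hg : Integrable (fun x => g x ^ 2) μ) :
    Integrable (fun x => f x * g x) μ := by
  refine Integrable.mono' (((hf.add hg).div_const 2)) (hfm.mul hgm)
    (ae_of_all _ fun x => ?_)
  rw [Real.norm_eq_abs, abs_mul]
  simp only [Pi.add_apply]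
  have := abs_nonneg (f x)
  have := abs_nonneg (g x)
  nlinarith [sq_abs (f x), sq_abs (g x), sq_nonneg (|f x| - |g x|)]

lemma my_cauchy_schwarz {α : Type*} [MeasurableSpace α] {μ : Measure α} [IsFiniteMeasure μ]
    {f g : α → ℝ}
    (hfm : AEStronglyMeasurable f μ) (hgm : AEStronglyMeasurable g μ)
    (hf2 : Integrable (fun x => f x ^ 2) μ) (hg2 : Integrable (fun x => g x ^ 2) μ) :
    (∫ x, f x * g x ∂μ) ^ 2 ≤ (∫ x, f x ^ 2 ∂μ) * ∫ x, g x ^ 2 ∂μ := by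
  have hfg : Integrable (fun x => f x * g x) μ := my_integrable_mul hfm hgm hf2 hg2
  set A := ∫ x, g x ^ 2 ∂μ
  set B := ∫ x, f x * g x ∂μ
  set D := ∫ x, f x ^ 2 ∂μ
  have key : ∀ l : ℝ, 0 ≤ A * (l * l) + (2 * B) * l + D := by
    intro l
    have h1 : (fun x => (l * g x + f x) ^ 2)
        = fun x => (l * l) * g x ^ 2 + (2 * l) * (f x * g x) + f x ^ 2 := by
      ext x; ring
    have h2 : 0 ≤ ∫ x, (l * g x + f x) ^ 2 ∂μ := integral_nonneg fun x => sq_nonneg _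
    have i2 : Integrable (fun x => (2 * l) * (f x * g x)) μ := hfg.const_mul _
    have i3 : Integrable (fun x => (l * l) * g x ^ 2) μ := hg2.const_mul _
    have i1 : Integrable (fun x => (l * l) * g x ^ 2 + (2 * l) * (f x * g x)) μ := i3.add i2
    rw [h1, integral_add i1 hf2, integral_add i3 i2, integral_const_mul,
      integral_const_mul] at h2
    calc (0:ℝ) ≤ l * l * A + 2 * l * B + D := h2
    _ = A * (l * l) + (2 * B) * l + D := by ring
  have hd := discrim_le_zero key
  rw [discrim] at hd
  nlinarith [hd]

lemma my_integrable_pi {α : Type*} [MeasurableSpace α] {μ : Measure α} {k : ℕ}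
    {f : α → Fin k → ℝ} (hm : AEStronglyMeasurable f μ)
    (h : ∀ i, Integrable (fun x => f x i) μ) : Integrable f μ := by
  refine Integrable.mono' (g := fun x => ∑ i, ‖f x i‖)
    (integrable_finset_sum _ fun i _ => (h i).norm) hm (ae_of_all _ fun x => ?_)
  refine (pi_norm_le_iff_of_nonneg (Finset.sum_nonneg fun i _ => norm_nonneg _)).2 fun i => ?_
  exact Finset.single_le_sum (fun j _ => norm_nonneg (f x j)) (Finset.mem_univ i)

lemma my_integral_apply {α : Type*} [MeasurableSpace α] {μ : Measure α} {k : ℕ}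
    {f : α → Fin k → ℝ} (hf : Integrable f μ) (i : Fin k) :
    (∫ x, f x ∂μ) i = ∫ x, f x i ∂μ := by
  have := (ContinuousLinearMap.proj (R := ℝ) (φ := fun _ : Fin k => ℝ) i).integral_comp_comm hf
  simpa using this.symm

set_option maxHeartbeats 1000000 in
/-- Constrained Cramér–Rao bound for estimators that are unbiased on the
support subspace `{α : supp α ⊆ S}`: the covariance-type matrix `C` at `α₀` satisfies
`C ⪰ σ² · U G⁻¹ Uᵀ`, where `G = H_Sᵀ H_S` and the columns of `U` are the standard basis
vectors indexed by `S`. -/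
theorem sparse_crb_maximal_support
    {m p s : ℕ} (hs : 1 ≤ s)
    (σ : ℝ) (hσ : 0 < σ)
    (ν : Measure (Fin m → ℝ))
    (hν : ν = Measure.pi fun _ : Fin m => gaussianReal 0 ⟨σ ^ 2, sq_nonneg σ⟩)
    (H : Matrix (Fin m) (Fin p) ℝ)
    (S : Finset (Fin p)) (hScard : S.card = s)
    (G : Matrix S S ℝ)
    (hGdef : G = (H.submatrix id (fun j : S => (j : Fin p)))ᵀ *
      H.submatrix id (fun j : S => (j : Fin p)))
    (hGinv : IsUnit G.det)
    (U : Matrix (Fin p) S ℝ)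
    (hU : ∀ (i : Fin p) (j : S), U i j = if i = (j : Fin p) then 1 else 0)
    (est : (Fin m → ℝ) → Fin p → ℝ) (hmeas : Measurable est)
    (hunbiased : ∀ α : Fin p → ℝ, Function.support α ⊆ (S : Set (Fin p)) →
      ∫ w, est (H.mulVec α + w) ∂ν = α)
    (α₀ : Fin p → ℝ) (hα₀ : Function.support α₀ ⊆ (S : Set (Fin p)))
    (hint : Integrable (fun w => ∑ i, (est (H.mulVec α₀ + w) i) ^ 2) ν)
    (C : Matrix (Fin p) (Fin p) ℝ)
    (hC : ∀ i j, C i j =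
      ∫ w, (est (H.mulVec α₀ + w) i - α₀ i) * (est (H.mulVec α₀ + w) j - α₀ j) ∂ν) :
    (C - σ ^ 2 • (U * G⁻¹ * Uᵀ)).PosSemidef := by
  have hV : (⟨σ ^ 2, sq_nonneg σ⟩ : ℝ≥0) ≠ 0 := by
    intro h
    exact (pow_ne_zero 2 hσ.ne') (congrArg NNReal.toReal h)
  set V : ℝ≥0 := ⟨σ ^ 2, sq_nonneg σ⟩ with hVdef
  have hVr : (V : ℝ) = σ ^ 2 := rfl
  subst hν
  set ν := Measure.pi fun _ : Fin m => gaussianReal 0 V with hνdef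
  haveI : IsProbabilityMeasure ν := by
    rw [hνdef]; infer_instance
  set H' := H.submatrix id (fun j : S => (j : Fin p)) with hH'
  -- symmetry facts
  have hGsym : Gᵀ = G := by rw [hGdef, transpose_mul, transpose_transpose]
  have hCsymm : Cᵀ = C := by
    ext i j
    rw [transpose_apply, hC, hC]
    exact integral_congr_ae (ae_of_all _ fun w => mul_comm _ _)
  have hMsym : (U * G⁻¹ * Uᵀ)ᵀ = U * G⁻¹ * Uᵀ := by
    rw [transpose_mul, transpose_mul, transpose_transpose, transpose_nonsing_inv, hGsym,
      Matrix.mul_assoc]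
  rw [posSemidef_iff_dotProduct_mulVec]
  constructor
  · show (C - σ ^ 2 • (U * G⁻¹ * Uᵀ))ᴴ = _
    rw [conjTranspose_eq_transpose_of_trivial, transpose_sub, transpose_smul, hCsymm, hMsym]
  intro x
  rw [star_trivial]
  -- basic matrix algebra
  have hHU : H * U = H' := by
    ext k j
    rw [Matrix.mul_apply]
    have : H' k j = H k (j : Fin p) := rfl
    rw [this]
    simp [hU, mul_ite, Finset.sum_ite_eq']
  set β : S → ℝ := G⁻¹.mulVec (Uᵀ.mulVec x) with hβ
  set u : Fin p → ℝ := U.mulVec β with hu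
  set q : ℝ := x ⬝ᵥ (U * G⁻¹ * Uᵀ).mulVec x with hq
  have f1 : q = x ⬝ᵥ u := by
    rw [hq, hu, hβ, ← Matrix.mulVec_mulVec, ← Matrix.mulVec_mulVec]
  have hGG : G.mulVec (G⁻¹.mulVec (Uᵀ.mulVec x)) = Uᵀ.mulVec x := by
    rw [Matrix.mulVec_mulVec, Matrix.mul_nonsing_inv _ hGinv, Matrix.one_mulVec]
  have f2 : β ⬝ᵥ G.mulVec β = q := by
    rw [hβ, hGG, f1, hu, dotProduct_mulVec x U β, ← Matrix.mulVec_transpose,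
      dotProduct_comm]
  set Hu : Fin m → ℝ := H.mulVec u with hHu
  have f5 : ∑ k, Hu k ^ 2 = q := by
    rw [hHu, hu, Matrix.mulVec_mulVec, hHU, ← f2, hGdef, ← Matrix.mulVec_mulVec,
      dotProduct_mulVec β H'ᵀ, Matrix.vecMul_transpose]
    simp [dotProduct, sq]
  have hu_supp : Function.support u ⊆ (S : Set (Fin p)) := by
    refine Function.support_subset_iff'.mpr fun i hiS => ?_
    rw [hu]
    show (Finset.univ : Finset S).sum _ = 0
    refine Finset.sum_eq_zero fun j _ => ?_
    show U i j * β j = 0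
    rw [hU, if_neg, zero_mul]
    rintro rfl
    exact hiS j.2
  -- estimator basics
  set d : (Fin m → ℝ) → Fin p → ℝ := fun w => est (H.mulVec α₀ + w) with hd
  have hdm : ∀ i, Measurable fun w => d w i := by
    intro i
    rw [hd]
    exact (measurable_pi_apply i).comp (hmeas.comp (by fun_prop))
  have hd_aesm : AEStronglyMeasurable d ν :=
    (hmeas.comp (by fun_prop : Measurable fun w : Fin m → ℝ => H.mulVec α₀ + w)).aestronglyMeasurable
  have hd2 : ∀ i, Integrable (fun w => d w i ^ 2) ν := by
    intro i
    refine hint.mono' ((hdm i).pow_const 2).aestronglyMeasurable (ae_of_all _ fun w => ?_)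
    rw [Real.norm_eq_abs, abs_of_nonneg (sq_nonneg _)]
    exact Finset.single_le_sum (fun j _ => sq_nonneg (d w j)) (Finset.mem_univ i)
  have hd1 : ∀ i, Integrable (fun w => d w i) ν := by
    intro i
    have := my_integrable_mul (hdm i).aestronglyMeasurable aestronglyMeasurable_const
      (hd2 i) (integrable_const ((1:ℝ) ^ 2))
    simpa using this
  have hdpi : Integrable d ν := my_integrable_pi hd_aesm hd1
  have hd0 : ∀ i, ∫ w, d w i ∂ν = α₀ i := by
    intro i
    rw [← my_integral_apply hdpi i, hd, hunbiased α₀ hα₀]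
  have hprod : ∀ i j, Integrable (fun w => (d w i - α₀ i) * (d w j - α₀ j)) ν := by
    intro i j
    have hsubint : ∀ i, Integrable (fun w => (d w i - α₀ i) ^ 2) ν := by
      intro i
      have : (fun w => (d w i - α₀ i) ^ 2)
          = fun w => d w i ^ 2 - (2 * α₀ i) * d w i + α₀ i ^ 2 := by ext w; ring
      rw [this]
      exact ((hd2 i).sub ((hd1 i).const_mul _)).add (integrable_const _)
    exact my_integrable_mul ((hdm i).sub measurable_const).aestronglyMeasurable
      ((hdm j).sub measurable_const).aestronglyMeasurable (hsubint i) (hsubint j)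
  -- the linear statistic g
  set g : (Fin m → ℝ) → ℝ := fun w => ∑ i, x i * (d w i - α₀ i) with hg
  have hgm : Measurable g := by
    rw [hg]
    exact Finset.measurable_sum _ fun i _ => ((hdm i).sub measurable_const).const_mul _
  have hgsq : ∀ w, g w ^ 2 = ∑ i, ∑ j, (x i * x j) * ((d w i - α₀ i) * (d w j - α₀ j)) := by
    intro w
    rw [hg, sq, Finset.sum_mul_sum]
    exact Finset.sum_congr rfl fun i _ => Finset.sum_congr rfl fun j _ => by ring
  have hg2 : Integrable (fun w => g w ^ 2) ν := by
    simp_rw [hgsq]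
    exact integrable_finset_sum _ fun i _ =>
      integrable_finset_sum _ fun j _ => (hprod i j).const_mul _
  have hg1 : Integrable g ν := by
    rw [hg]
    exact integrable_finset_sum _ fun i _ => ((hd1 i).sub (integrable_const _)).const_mul _
  have hgint0 : ∫ w, g w ∂ν = 0 := by
    have e : ∫ w, ∑ i, x i * (d w i - α₀ i) ∂ν = ∑ i, ∫ w, x i * (d w i - α₀ i) ∂ν :=
      integral_finset_sum _ fun i _ => ((hd1 i).sub (integrable_const _)).const_mul _
    have e0 : ∫ w, g w ∂ν = ∫ w, ∑ i, x i * (d w i - α₀ i) ∂ν := rfl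
    rw [e0, e]
    refine Finset.sum_eq_zero fun i _ => ?_
    rw [integral_const_mul, integral_sub (hd1 i) (integrable_const _), hd0 i, integral_const]
    simp
  set R : ℝ := x ⬝ᵥ C.mulVec x with hR
  have hRg : R = ∫ w, g w ^ 2 ∂ν := by
    have e1 : R = ∑ i, ∑ j, (x i * x j) * C i j := by
      rw [hR]
      simp only [dotProduct, Matrix.mulVec, Finset.mul_sum]
      exact Finset.sum_congr rfl fun i _ => Finset.sum_congr rfl fun j _ => by ring
    have e2 : ∀ i j, (x i * x j) * C i j
        = ∫ w, (x i * x j) * ((d w i - α₀ i) * (d w j - α₀ j)) ∂ν := by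
      intro i j
      rw [hC, ← integral_const_mul]
    have e3 : ∀ i, ∑ j, ∫ w, (x i * x j) * ((d w i - α₀ i) * (d w j - α₀ j)) ∂ν
        = ∫ w, ∑ j, (x i * x j) * ((d w i - α₀ i) * (d w j - α₀ j)) ∂ν := fun i =>
      (integral_finset_sum _ fun j _ => (hprod i j).const_mul _).symm
    have e4 : ∑ i, ∫ w, ∑ j, (x i * x j) * ((d w i - α₀ i) * (d w j - α₀ j)) ∂ν
        = ∫ w, ∑ i, ∑ j, (x i * x j) * ((d w i - α₀ i) * (d w j - α₀ j)) ∂ν :=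
      (integral_finset_sum _ fun i _ =>
        integrable_finset_sum _ fun j _ => (hprod i j).const_mul _).symm
    rw [e1]
    simp_rw [e2, e3]
    rw [e4]
    exact integral_congr_ae (ae_of_all _ fun w => (hgsq w).symm)
  have hR0 : 0 ≤ R := by
    rw [hRg]; exact integral_nonneg fun w => sq_nonneg _
  have key : ∀ t : ℝ, (t * q) ^ 2 ≤ R * (rexp (t ^ 2 * q / V) - 1) := by
    intro t
    set c : Fin m → ℝ := fun k => t * Hu k with hc
    set L : (Fin m → ℝ) → ℝ := fun w => ∏ i, rexp ((c i * w i - c i ^ 2 / 2) / V) with hL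
    have hLm : Measurable L := my_L_meas V c
    have hLint : Integrable L ν := my_L_integrable V c hV
    have hL2 : Integrable (fun w => L w ^ 2) ν := my_L_sq_integrable V c hV
    have hsum_c : ∑ k, c k ^ 2 = t ^ 2 * q := by
      simp only [hc]
      rw [← f5, Finset.mul_sum]
      exact Finset.sum_congr rfl fun k _ => by ring
    have hL2int : ∫ w, L w ^ 2 ∂ν = rexp (t ^ 2 * q / V) := by
      have := my_L_sq_integral V c hV
      rw [hsum_c] at this
      exact this
    set αt : Fin p → ℝ := α₀ + t • u with hαt
    have hαt_supp : Function.support αt ⊆ (S : Set (Fin p)) := by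
      refine (Function.support_add _ _).trans (Set.union_subset hα₀ ?_)
      exact (Function.support_smul_subset_right _ _).trans hu_supp
    have harg : ∀ w, H.mulVec α₀ + (w + c) = H.mulVec αt + w := by
      intro w
      have h1 : H.mulVec αt = H.mulVec α₀ + t • Hu := by
        rw [hαt, Matrix.mulVec_add, Matrix.mulVec_smul, hHu]
      have h2 : c = t • Hu := by
        funext k; simp [hc]
      rw [h1, h2]
      abel
    have hdiL : ∀ i, Integrable (fun w => d w i * L w) ν := fun i =>
      my_integrable_mul (hdm i).aestronglyMeasurable hLm.aestronglyMeasurable (hd2 i) hL2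
    have htint : ∀ i, Integrable (fun w => est (H.mulVec αt + w) i) ν := by
      intro i
      have h0 : Integrable (fun w => (fun w' => est (H.mulVec α₀ + w') i) (w + c)) ν :=
        (my_cm_int_iff V c (fun w' => est (H.mulVec α₀ + w') i) hV).mpr (hdiL i)
      exact h0.congr (ae_of_all _ fun w => by simp only []; rw [harg w])
    have hpit : Integrable (fun w => est (H.mulVec αt + w)) ν :=
      my_integrable_pi (hmeas.comp (by fun_prop :
        Measurable fun w : Fin m → ℝ => H.mulVec αt + w)).aestronglyMeasurable htint
    have hmean : ∀ i, ∫ w, d w i * L w ∂ν = αt i := by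
      intro i
      have h1 := my_cm_integral V c (fun w' => est (H.mulVec α₀ + w') i) hV
      have h2 : ∫ w, est (H.mulVec α₀ + (w + c)) i ∂ν = ∫ w, est (H.mulVec αt + w) i ∂ν :=
        integral_congr_ae (ae_of_all _ fun w => by simp only [harg w])
      have h3 : ∫ w, est (H.mulVec αt + w) i ∂ν = αt i := by
        rw [← my_integral_apply hpit i, hunbiased αt hαt_supp]
      rw [← h3, ← h2, ← h1]
    have hgL : ∫ w, g w * L w ∂ν = t * q := by
      have e : ∀ w, g w * L w = ∑ i, (x i * (d w i * L w) - (x i * α₀ i) * L w) := by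
        intro w
        have : g w = ∑ i, x i * (d w i - α₀ i) := rfl
        rw [this, Finset.sum_mul]
        exact Finset.sum_congr rfl fun i _ => by ring
      simp_rw [e]
      have hterm : ∀ i : Fin p, Integrable (fun w => x i * (d w i * L w) - (x i * α₀ i) * L w) ν :=
        fun i => ((hdiL i).const_mul _).sub (hLint.const_mul _)
      rw [integral_finset_sum _ fun i _ => hterm i]
      have : ∀ i : Fin p, ∫ w, (x i * (d w i * L w) - (x i * α₀ i) * L w) ∂ν
          = x i * (t * u i) := by
        intro i
        rw [integral_sub ((hdiL i).const_mul _) (hLint.const_mul _), integral_const_mul,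
          integral_const_mul, hmean i, my_L_integral V c hV, mul_one]
        have : αt i = α₀ i + t * u i := rfl
        rw [this]
        ring
      simp_rw [this]
      rw [f1, dotProduct, Finset.mul_sum]
      exact Finset.sum_congr rfl fun i _ => by ring
    have hgLm1 : ∫ w, g w * (L w - 1) ∂ν = t * q := by
      have e : ∀ w, g w * (L w - 1) = g w * L w - g w := fun w => by ring
      simp_rw [e]
      rw [integral_sub (my_integrable_mul hgm.aestronglyMeasurable hLm.aestronglyMeasurable
        hg2 hL2) hg1, hgL, hgint0, sub_zero]
    have hLm1sq : Integrable (fun w => (L w - 1) ^ 2) ν := by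
      have e : ∀ w : Fin m → ℝ, (L w - 1) ^ 2 = L w ^ 2 - 2 * L w + 1 := fun w => by ring
      simp_rw [e]
      have i2 : Integrable (fun w => L w ^ 2 - 2 * L w) ν := hL2.sub (hLint.const_mul 2)
      exact i2.add (integrable_const 1)
    have hB : ∫ w, (L w - 1) ^ 2 ∂ν = rexp (t ^ 2 * q / V) - 1 := by
      have e : ∀ w : Fin m → ℝ, (L w - 1) ^ 2 = L w ^ 2 - 2 * L w + 1 := fun w => by ring
      simp_rw [e]
      have i2 : Integrable (fun w => L w ^ 2 - 2 * L w) ν := hL2.sub (hLint.const_mul 2)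
      rw [integral_add i2 (integrable_const 1),
        integral_sub hL2 (hLint.const_mul 2), integral_const_mul, hL2int,
        my_L_integral V c hV, integral_const]
      simp only [measure_univ, probReal_univ, ENNReal.toReal_one, smul_eq_mul, one_mul, mul_one]
      ring
    have hcs := my_cauchy_schwarz hgm.aestronglyMeasurable
      (hLm.sub measurable_const).aestronglyMeasurable hg2 hLm1sq
    have e2 : (fun w => (L w - 1) ^ 2) = fun w => (L w - 1) ^ 2 := rfl
    simp only [Pi.sub_apply] at hcs
    rw [hgLm1, hB, ← hRg] at hcs
    exact hcs
  show 0 ≤ x ⬝ᵥ (C - σ ^ 2 • (U * G⁻¹ * Uᵀ)).mulVec x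
  have expand : x ⬝ᵥ (C - σ ^ 2 • (U * G⁻¹ * Uᵀ)).mulVec x = R - σ ^ 2 * q := by
    rw [Matrix.sub_mulVec, dotProduct_sub, Matrix.smul_mulVec,
      dotProduct_smul, smul_eq_mul]
  rw [expand]
  have hVpos : (0:ℝ) < V := by rw [hVr]; positivity
  rcases le_or_gt q 0 with hq0 | hq0
  · have : σ ^ 2 * q ≤ 0 := mul_nonpos_of_nonneg_of_nonpos (sq_nonneg σ) hq0
    linarith
  · have hstep : ∀ n : ℕ, q * V ≤ R * rexp ((1/(n+1) : ℝ) ^ 2 * q / V) := by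
      intro n
      set t : ℝ := (1/(n+1) : ℝ) with ht'
      have ht : 0 < t := by positivity
      have h1 := key t
      set E : ℝ := rexp (t ^ 2 * q / V) with hE
      have hEpos : 0 < E := Real.exp_pos _
      have h2 : E - 1 ≤ (t ^ 2 * q / V) * E := by
        have h0 := Real.add_one_le_exp (-(t ^ 2 * q / V))
        rw [Real.exp_neg, ← hE] at h0
        have h4 : (-(t ^ 2 * q / V) + 1) * E ≤ E⁻¹ * E :=
          mul_le_mul_of_nonneg_right h0 hEpos.le
        rw [inv_mul_cancel₀ hEpos.ne'] at h4
        nlinarith [h4]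
      have h3 : (t * q) ^ 2 ≤ R * ((t ^ 2 * q / V) * E) :=
        h1.trans (mul_le_mul_of_nonneg_left h2 hR0)
      -- divide by t^2 * q / V > 0
      have h5 : (t ^ 2 * q / V) * (q * V) ≤ (t ^ 2 * q / V) * (R * E) := by
        have hlhs : (t ^ 2 * q / V) * (q * V) = (t * q) ^ 2 := by
          field_simp
        rw [hlhs]
        calc (t * q) ^ 2 ≤ R * ((t ^ 2 * q / V) * E) := h3
        _ = (t ^ 2 * q / V) * (R * E) := by ring
      have hpos : 0 < t ^ 2 * q / V := by positivity
      exact le_of_mul_le_mul_left h5 hpos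
    have hlim : Filter.Tendsto (fun n : ℕ => R * rexp ((1/(n+1) : ℝ) ^ 2 * q / V))
        Filter.atTop (nhds (R * 1)) := by
      refine Filter.Tendsto.const_mul R ?_
      have h0 : Filter.Tendsto (fun n : ℕ => (1/(n+1) : ℝ)) Filter.atTop (nhds 0) :=
        tendsto_one_div_add_atTop_nhds_zero_nat
      have h1 : Filter.Tendsto (fun n : ℕ => (1/(n+1) : ℝ) ^ 2 * q / V)
          Filter.atTop (nhds 0) := by
        have h2 : Filter.Tendsto (fun n : ℕ => (1/(n+1) : ℝ) ^ 2 * q / V)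
            Filter.atTop (nhds ((0:ℝ) ^ 2 * q / V)) := ((h0.pow 2).mul_const q).div_const (V : ℝ)
        rw [show ((0:ℝ) ^ 2 * q / V) = 0 by ring] at h2
        exact h2
      have h3 := (Real.continuous_exp.tendsto 0).comp h1
      rw [Real.exp_zero] at h3
      exact h3
    have hfin : q * V ≤ R * 1 :=
      ge_of_tendsto hlim (Filter.Eventually.of_forall hstep)
    rw [mul_one] at hfin
    rw [hVr] at hfin
    linarith
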